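/- (Quadratic growth of the pinball risk) Let τ ∈ (0,1) and let U be a real-valued random variable with cumulative distribution function F(s) := P(U ≤ s). Suppose F(0) = τ and that there exist c₀ > 0 and r₀ > 0 such that F(t) − F(s) ≥ c₀(t − s) for all −r₀ ≤ s ≤ t ≤ r₀. Then for every δ with |δ| ≤ r₀, E[ρ_τ(U − δ) − ρ_τ(U)] ≥ (c₀/2)·δ². -/

import Mathlib

open MeasureTheory

/-- The pinball (check) loss `ρ_τ(u) = u (τ - 1{u < 0})`. -/
noncomputable def pinball (τ u : ℝ) : ℝ := u * (τ - if u < 0 then 1 else 0)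

open Classical in
lemma pinball_diff_eq (τ δ u : ℝ) :
    pinball τ (u - δ) - pinball τ u
      = δ * ((if u ≤ 0 then (1:ℝ) else 0) - τ)
        + (if u ∈ Set.uIoc 0 δ then |δ - u| else 0) := by
  simp only [pinball, Set.mem_uIoc]
  rcases abs_cases (δ - u) with ⟨h1, h2⟩ | ⟨h1, h2⟩ <;>
    split_ifs <;> (try push_neg at *) <;> first
      | linarith
      | (exfalso; rcases ‹_ ∨ _› with ⟨ha, hb⟩ | ⟨ha, hb⟩ <;> linarith)
      | (rw [h1]; rcases ‹_ ∨ _› with ⟨ha, hb⟩ | ⟨ha, hb⟩ <;> ring_nf <;> linarith)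
      | (obtain ⟨ha, hb⟩ := ‹(0 < u → δ < u) ∧ (δ < u → 0 < u)›;
         rcases lt_trichotomy δ u with hc|hc|hc <;>
           first | linarith [hb hc] | linarith [ha (by linarith)] | linarith)

lemma uIoc_scale_subset (δ : ℝ) {a : ℝ} (ha0 : 0 ≤ a) (ha1 : a ≤ 1) :
    Set.uIoc 0 (a * δ) ⊆ Set.uIoc 0 δ := by
  intro x hx
  rw [Set.mem_uIoc] at hx ⊢
  rcases le_or_gt 0 δ with h | h
  · rcases hx with ⟨h1, h2⟩ | ⟨h1, h2⟩
    · exact Or.inl ⟨h1, by nlinarith⟩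
    · exact absurd h1 (by nlinarith)
  · rcases hx with ⟨h1, h2⟩ | ⟨h1, h2⟩
    · exact absurd h2 (by nlinarith)
    · exact Or.inr ⟨by nlinarith, h2⟩

open Classical in
lemma sum_indicator_le (δ u : ℝ) (n : ℕ) :
    ∑ j ∈ Finset.range n,
        (|δ| / n) * Set.indicator (Set.uIoc 0 ((j : ℝ) * δ / n)) (fun _ => (1:ℝ)) u
      ≤ (if u ∈ Set.uIoc 0 δ then |δ - u| else 0) := by
  rcases Nat.eq_zero_or_pos n with hn | hn
  · subst hn
    simp only [Finset.range_zero, Finset.sum_empty]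
    split_ifs <;> simp [abs_nonneg]
  have hn' : (0:ℝ) < n := by exact_mod_cast hn
  by_cases hu : u ∈ Set.uIoc 0 δ
  · rw [if_pos hu]
    have hδ0 : δ ≠ 0 := by
      rintro rfl
      rw [Set.mem_uIoc] at hu
      rcases hu with ⟨h1, h2⟩ | ⟨h1, h2⟩ <;> linarith
    set m : ℝ := u * n / δ with hm
    have hcase : (0 < δ ∧ 0 < u ∧ u ≤ δ) ∨ (δ < 0 ∧ δ < u ∧ u ≤ 0) := by
      rw [Set.mem_uIoc] at hu
      rcases hu with ⟨h1, h2⟩ | ⟨h1, h2⟩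
      · exact Or.inl ⟨by rcases lt_or_ge 0 δ with h|h; exact h; exact absurd h2 (by linarith), h1, h2⟩
      · exact Or.inr ⟨by rcases lt_or_ge δ 0 with h|h; exact h; exact absurd h1 (by linarith), h1, h2⟩
    have hm0 : 0 ≤ m := by
      rcases hcase with ⟨h1, h2, h3⟩ | ⟨h1, h2, h3⟩
      · positivity
      · exact div_nonneg_iff.mpr (Or.inr ⟨by nlinarith, h1.le⟩)
    have hmn : m ≤ n := by
      rcases hcase with ⟨h1, h2, h3⟩ | ⟨h1, h2, h3⟩
      · rw [hm, div_le_iff₀ h1]; nlinarith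
      · rw [hm, div_le_iff_of_neg h1]; nlinarith
    have key : ∀ j ∈ Finset.range n,
        (|δ| / n) * Set.indicator (Set.uIoc 0 ((j : ℝ) * δ / n)) (fun _ => (1:ℝ)) u
          ≤ (if ⌈m⌉₊ ≤ j then |δ| / n else 0) := by
      intro j hj
      by_cases hjm : u ∈ Set.uIoc 0 ((j : ℝ) * δ / n)
      · have hmj : m ≤ (j : ℝ) := by
          rw [Set.mem_uIoc] at hjm
          rcases hcase with ⟨h1, h2, h3⟩ | ⟨h1, h2, h3⟩
          · rcases hjm with ⟨g1, g2⟩ | ⟨g1, g2⟩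
            · rw [hm, div_le_iff₀ h1]; rw [le_div_iff₀ hn'] at g2; nlinarith
            · linarith
          · rcases hjm with ⟨g1, g2⟩ | ⟨g1, g2⟩
            · linarith
            · rw [hm, div_le_iff_of_neg h1]; rw [div_lt_iff₀ hn'] at g1; nlinarith
        rw [if_pos (by rwa [Nat.ceil_le]), Set.indicator_of_mem hjm]
        simp
      · rw [Set.indicator_of_notMem hjm, mul_zero]
        split_ifs <;> positivity
    have hcast : ((n - ⌈m⌉₊ : ℕ) : ℝ) ≤ (n : ℝ) - m := by
      rcases le_or_gt (⌈m⌉₊) n with h | h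
      · rw [Nat.cast_sub h]
        have h2 : ((⌈m⌉₊ : ℕ) : ℝ) ≤ (n : ℝ) := by exact_mod_cast h
        linarith [Nat.le_ceil m]
      · rw [Nat.sub_eq_zero_of_le h.le, Nat.cast_zero]
        linarith
    have heq : ((n : ℝ) - m) * (|δ| / n) = |δ - u| := by
      rcases hcase with ⟨h1, h2, h3⟩ | ⟨h1, h2, h3⟩
      · rw [abs_of_pos h1, abs_of_nonneg (by linarith : (0:ℝ) ≤ δ - u), hm]
        field_simp
      · rw [abs_of_neg h1, abs_of_nonpos (by linarith : δ - u ≤ 0), hm]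
        field_simp
    calc ∑ j ∈ Finset.range n,
            (|δ| / n) * Set.indicator (Set.uIoc 0 ((j : ℝ) * δ / n)) (fun _ => (1:ℝ)) u
        ≤ ∑ j ∈ Finset.range n, (if ⌈m⌉₊ ≤ j then |δ| / n else 0) := Finset.sum_le_sum key
      _ = ((n - ⌈m⌉₊ : ℕ) : ℝ) * (|δ| / n) := by
          rw [← Finset.sum_filter]
          have hfil : (Finset.range n).filter (fun j => ⌈m⌉₊ ≤ j) = Finset.Ico ⌈m⌉₊ n := by
            ext j; simp only [Finset.mem_filter, Finset.mem_range, Finset.mem_Ico]; omega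
          rw [hfil, Finset.sum_const, Nat.card_Ico, nsmul_eq_mul]
      _ ≤ ((n : ℝ) - m) * (|δ| / n) := mul_le_mul_of_nonneg_right hcast (by positivity)
      _ = |δ - u| := heq
  · rw [if_neg hu]
    have hz : ∀ j ∈ Finset.range n,
        (|δ| / n) * Set.indicator (Set.uIoc 0 ((j : ℝ) * δ / n)) (fun _ => (1:ℝ)) u = 0 := by
      intro j hj
      rw [Set.indicator_of_notMem, mul_zero]
      intro hmem
      exact hu (uIoc_scale_subset δ (a := (j:ℝ)/n) (by positivity)
        (by rw [div_le_one hn']; exact_mod_cast (Finset.mem_range.mp hj).le)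
        (by rw [div_mul_eq_mul_div]; exact hmem))
    rw [Finset.sum_congr rfl hz, Finset.sum_const, smul_zero]

lemma sum_range_id_real (n : ℕ) (hn : 0 < n) :
    (∑ j ∈ Finset.range n, (j:ℝ)) = n * ((n:ℝ) - 1) / 2 := by
  have h := Finset.sum_range_id_mul_two n
  have h2 : ((∑ j ∈ Finset.range n, j : ℕ) : ℝ) * 2 = (n:ℝ) * ((n:ℝ) - 1) := by
    rw [← Nat.cast_ofNat, ← Nat.cast_mul, h]
    push_cast [Nat.cast_sub hn]
    ring
  push_cast at h2
  linarith

/-- Quadratic growth of the pinball risk: if `F(0) = τ` and the CDF `F` of `U` grows at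
rate at least `c₀` on `[−r₀, r₀]`, then `E[ρ_τ(U − δ) − ρ_τ(U)] ≥ (c₀/2) δ²` for `|δ| ≤ r₀`. -/
theorem pinball_risk_quadratic_growth
    {Ω : Type*} [MeasurableSpace Ω] (μ : Measure Ω) [IsProbabilityMeasure μ]
    (τ : ℝ) (hτ : τ ∈ Set.Ioo (0:ℝ) 1)
    (U : Ω → ℝ) (hU : Measurable U)
    (c₀ r₀ : ℝ) (hc₀ : 0 < c₀) (hr₀ : 0 < r₀)
    (hF0 : (μ {ω | U ω ≤ 0}).toReal = τ)
    (hgrow : ∀ s t : ℝ, -r₀ ≤ s → s ≤ t → t ≤ r₀ →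
      c₀ * (t - s) ≤ (μ {ω | U ω ≤ t}).toReal - (μ {ω | U ω ≤ s}).toReal) :
    ∀ δ : ℝ, |δ| ≤ r₀ →
      (c₀ / 2) * δ ^ 2 ≤ ∫ ω, (pinball τ (U ω - δ) - pinball τ (U ω)) ∂μ := by
  classical
  intro δ hδr
  set g : Ω → ℝ := fun ω => pinball τ (U ω - δ) - pinball τ (U ω) with hg
  -- measurability of pinball
  have hpin : Measurable (fun u : ℝ => pinball τ u) := by
    unfold pinball
    exact measurable_id.mul (measurable_const.sub
      (Measurable.ite measurableSet_Iio measurable_const measurable_const))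
  have hgmeas : Measurable g := (hpin.comp (hU.sub measurable_const)).sub (hpin.comp hU)
  -- integrability of g
  have hgbdd : ∀ ω, ‖g ω‖ ≤ |δ| * (1 + |τ|) + |δ| := by
    intro ω
    rw [Real.norm_eq_abs]
    simp only [hg]
    rw [pinball_diff_eq τ δ (U ω)]
    have h1 : |δ * ((if U ω ≤ 0 then (1:ℝ) else 0) - τ)| ≤ |δ| * (1 + |τ|) := by
      rw [abs_mul]
      apply mul_le_mul_of_nonneg_left _ (abs_nonneg δ)
      refine (abs_sub _ _).trans ?_
      have hb : |(if U ω ≤ 0 then (1:ℝ) else 0)| ≤ 1 := by split_ifs <;> simp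
      linarith
    have h2 : |(if U ω ∈ Set.uIoc 0 δ then |δ - U ω| else 0)| ≤ |δ| := by
      split_ifs with h
      · rw [abs_abs]
        rw [Set.mem_uIoc] at h
        rcases abs_cases (δ - U ω) with ⟨e1, e2⟩ | ⟨e1, e2⟩ <;>
          rcases abs_cases δ with ⟨f1, f2⟩ | ⟨f1, f2⟩ <;>
          rcases h with ⟨p1, p2⟩ | ⟨p1, p2⟩ <;> linarith
      · simp [abs_nonneg]
    calc |_ + _| ≤ _ := abs_add_le _ _
      _ ≤ |δ| * (1 + |τ|) + |δ| := add_le_add h1 h2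
  have hgint : Integrable g μ :=
    (integrable_const (|δ| * (1 + |τ|) + |δ|)).mono' hgmeas.aestronglyMeasurable
      (Filter.Eventually.of_forall hgbdd)
  -- indicator integrals
  have hind_int : ∀ (S : Set ℝ), MeasurableSet S →
      Integrable (fun ω => S.indicator (fun _ => (1:ℝ)) (U ω)) μ := by
    intro S hS
    have h : (fun ω => S.indicator (fun _ => (1:ℝ)) (U ω))
        = (U ⁻¹' S).indicator (fun _ => (1:ℝ)) := rfl
    rw [h]
    exact (integrable_indicator_iff (hU hS)).2 (integrableOn_const (measure_ne_top μ _))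
  have hind_val : ∀ (S : Set ℝ), MeasurableSet S →
      ∫ ω, S.indicator (fun _ => (1:ℝ)) (U ω) ∂μ = (μ (U ⁻¹' S)).toReal := by
    intro S hS
    have h : (fun ω => S.indicator (fun _ => (1:ℝ)) (U ω))
        = (U ⁻¹' S).indicator (fun _ => (1:ℝ)) := rfl
    rw [h]
    exact integral_indicator_one (hU hS)
  -- measure of uIoc preimages
  have hμc : ∀ c : ℝ, |c| ≤ r₀ → c₀ * |c| ≤ (μ (U ⁻¹' (Set.uIoc 0 c))).toReal := by
    intro c hc
    rcases le_or_gt 0 c with h | h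
    · rw [Set.uIoc_of_le h]
      have hset : U ⁻¹' Set.Ioc 0 c = {ω | U ω ≤ c} \ {ω | U ω ≤ 0} := by
        ext ω
        simp only [Set.mem_preimage, Set.mem_Ioc, Set.mem_diff, Set.mem_setOf_eq, not_le]
        tauto
      have hsub : {ω | U ω ≤ 0} ⊆ {ω | U ω ≤ c} := fun ω hω => le_trans hω h
      have hms : MeasurableSet {ω | U ω ≤ 0} := hU measurableSet_Iic
      rw [hset, measure_diff hsub hms.nullMeasurableSet (measure_ne_top μ _),
        ENNReal.toReal_sub_of_le (measure_mono hsub) (measure_ne_top μ _)]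
      have := hgrow 0 c (by linarith) h (by rwa [abs_of_nonneg h] at hc)
      rw [abs_of_nonneg h]
      linarith
    · rw [Set.uIoc_comm, Set.uIoc_of_le h.le]
      have hset : U ⁻¹' Set.Ioc c 0 = {ω | U ω ≤ 0} \ {ω | U ω ≤ c} := by
        ext ω
        simp only [Set.mem_preimage, Set.mem_Ioc, Set.mem_diff, Set.mem_setOf_eq, not_le]
        tauto
      have hsub : {ω | U ω ≤ c} ⊆ {ω | U ω ≤ 0} := fun ω hω => le_trans hω h.le
      have hms : MeasurableSet {ω | U ω ≤ c} := hU measurableSet_Iic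
      rw [hset, measure_diff hsub hms.nullMeasurableSet (measure_ne_top μ _),
        ENNReal.toReal_sub_of_le (measure_mono hsub) (measure_ne_top μ _)]
      have := hgrow c 0 (by rw [abs_of_neg h] at hc; linarith) h.le (by linarith)
      rw [abs_of_neg h]
      linarith
  -- the lower bound for each n
  have key : ∀ n : ℕ, 0 < n → (c₀ * δ ^ 2 / 2) * (1 - 1 / (n:ℝ)) ≤ ∫ ω, g ω ∂μ := by
    intro n hn
    have hn' : (0:ℝ) < n := by exact_mod_cast hn
    set L : Ω → ℝ := fun ω =>
      δ * (Set.indicator {a : ℝ | a ≤ 0} (fun _ => (1:ℝ)) (U ω) - τ)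
        + ∑ j ∈ Finset.range n,
            (|δ| / n) * Set.indicator (Set.uIoc 0 ((j : ℝ) * δ / n)) (fun _ => (1:ℝ)) (U ω)
      with hL
    have hLle : ∀ ω, L ω ≤ g ω := by
      intro ω
      rw [hL, hg]
      simp only []
      rw [pinball_diff_eq τ δ (U ω)]
      apply add_le_add
      · have hiff : Set.indicator {a : ℝ | a ≤ 0} (fun _ => (1:ℝ)) (U ω)
            = (if U ω ≤ 0 then (1:ℝ) else 0) := by
          by_cases h : U ω ≤ 0 <;> simp [Set.indicator_apply, Set.mem_setOf_eq, h]
        rw [hiff]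
      · exact sum_indicator_le δ (U ω) n
    have hint1 : Integrable (fun ω =>
        δ * (Set.indicator {a : ℝ | a ≤ 0} (fun _ => (1:ℝ)) (U ω) - τ)) μ :=
      (((hind_int _ measurableSet_Iic).sub (integrable_const τ)).const_mul δ)
    have hint2 : Integrable (fun ω => ∑ j ∈ Finset.range n,
        (|δ| / n) * Set.indicator (Set.uIoc 0 ((j : ℝ) * δ / n)) (fun _ => (1:ℝ)) (U ω)) μ := by
      apply integrable_finset_sum
      intro j hj
      exact (hind_int _ measurableSet_uIoc).const_mul _
    have hLint : Integrable L μ := hint1.add hint2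
    have hmono : ∫ ω, L ω ∂μ ≤ ∫ ω, g ω ∂μ := integral_mono hLint hgint hLle
    have hLval : ∫ ω, L ω ∂μ
        = δ * ((μ (U ⁻¹' {a : ℝ | a ≤ 0})).toReal - τ)
          + ∑ j ∈ Finset.range n,
              (|δ| / n) * (μ (U ⁻¹' (Set.uIoc 0 ((j : ℝ) * δ / n)))).toReal := by
      rw [hL, integral_add hint1 hint2]
      congr 1
      · rw [integral_const_mul,
          integral_sub (hind_int {a : ℝ | a ≤ 0} measurableSet_Iic) (integrable_const τ),
          hind_val {a : ℝ | a ≤ 0} measurableSet_Iic, integral_const]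
        simp
      · rw [integral_finset_sum _ (fun j hj => (hind_int _ measurableSet_uIoc).const_mul _)]
        apply Finset.sum_congr rfl
        intro j hj
        rw [integral_const_mul, hind_val _ measurableSet_uIoc]
    have hpre0 : U ⁻¹' {a : ℝ | a ≤ 0} = {ω | U ω ≤ 0} := rfl
    have hsum_lb : ∑ j ∈ Finset.range n,
        (|δ| / n) * (μ (U ⁻¹' (Set.uIoc 0 ((j : ℝ) * δ / n)))).toReal
        ≥ ∑ j ∈ Finset.range n, (|δ| / n) * (c₀ * ((j:ℝ) * |δ| / n)) := by
      apply Finset.sum_le_sum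
      intro j hj
      apply mul_le_mul_of_nonneg_left _ (by positivity)
      have habs : |(j : ℝ) * δ / n| = (j:ℝ) * |δ| / n := by
        rw [abs_div, abs_mul, Nat.abs_cast, Nat.abs_cast]
      have hjr : |(j : ℝ) * δ / n| ≤ r₀ := by
        rw [habs]
        have hjn : (j:ℝ) ≤ n := by exact_mod_cast (Finset.mem_range.mp hj).le
        calc (j:ℝ) * |δ| / n ≤ (n:ℝ) * |δ| / n := by gcongr
          _ = |δ| := by field_simp
          _ ≤ r₀ := hδr
      have := hμc ((j : ℝ) * δ / n) hjr
      rwa [habs] at this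
    have hgauss : ∑ j ∈ Finset.range n, (|δ| / n) * (c₀ * ((j:ℝ) * |δ| / n))
        = (c₀ * δ ^ 2 / 2) * (((n:ℝ) - 1) / n) := by
      have hs : ∑ j ∈ Finset.range n, (|δ| / n) * (c₀ * ((j:ℝ) * |δ| / n))
          = (c₀ * |δ|^2 / (n:ℝ)^2) * ∑ j ∈ Finset.range n, (j:ℝ) := by
        rw [Finset.mul_sum]
        apply Finset.sum_congr rfl
        intro j hj
        field_simp
      rw [hs, sum_range_id_real n hn, sq_abs]
      field_simp
    have hfrac : (1 - 1 / (n:ℝ)) = ((n:ℝ) - 1) / n := by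
      field_simp
    calc (c₀ * δ ^ 2 / 2) * (1 - 1 / (n:ℝ))
        = (c₀ * δ ^ 2 / 2) * (((n:ℝ) - 1) / n) := by rw [hfrac]
      _ = ∑ j ∈ Finset.range n, (|δ| / n) * (c₀ * ((j:ℝ) * |δ| / n)) := hgauss.symm
      _ ≤ ∑ j ∈ Finset.range n,
            (|δ| / n) * (μ (U ⁻¹' (Set.uIoc 0 ((j : ℝ) * δ / n)))).toReal := hsum_lb
      _ = δ * ((μ (U ⁻¹' {a : ℝ | a ≤ 0})).toReal - τ)
          + ∑ j ∈ Finset.range n,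
              (|δ| / n) * (μ (U ⁻¹' (Set.uIoc 0 ((j : ℝ) * δ / n)))).toReal := by
          rw [hpre0, hF0]
          ring
      _ = ∫ ω, L ω ∂μ := hLval.symm
      _ ≤ ∫ ω, g ω ∂μ := hmono
  -- pass to the limit
  have hlim : Filter.Tendsto (fun n : ℕ => (c₀ * δ ^ 2 / 2) * (1 - 1 / (n:ℝ)))
      Filter.atTop (nhds ((c₀ * δ ^ 2 / 2) * (1 - 0))) :=
    Filter.Tendsto.const_mul _ (Filter.Tendsto.const_sub _ tendsto_one_div_atTop_nhds_zero_nat)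
  have hle : (c₀ * δ ^ 2 / 2) * (1 - 0) ≤ ∫ ω, g ω ∂μ := by
    apply le_of_tendsto hlim
    filter_upwards [Filter.eventually_ge_atTop 1] with n hn
    exact key n hn
  calc (c₀ / 2) * δ ^ 2 = (c₀ * δ ^ 2 / 2) * (1 - 0) := by ring
    _ ≤ ∫ ω, g ω ∂μ := hle
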